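/- Let p be a prime and P_1, ..., P_d ∈ M_n(ℤ_p) be pairwise commuting matrices with P_i² ≡ P_i (mod p) for each i, P_i P_j ≡ 0 (mod p) for i ≠ j, and P_1 + ... + P_d ≡ I (mod p), where I is the identity matrix. Then the limits P̃_i = lim_j P_i^{p^j} exist and satisfy P̃_1 + ... + P̃_d = I, P̃_i² = P̃_i, and P̃_i P̃_j = 0 for i ≠ j. In particular ℤ_p^n decomposes as the direct sum of the images of the P̃_i. -/

import Mathlib

open Filter

namespace Stmt11Aux

variable {p : ℕ} [hp : Fact p.Prime] {n : ℕ}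

/-- entries all divisible by `p^m` -/
def DD [Fact p.Prime] (m : ℕ) (A : Matrix (Fin n) (Fin n) ℤ_[p]) : Prop :=
  ∀ r s, (p : ℤ_[p]) ^ m ∣ A r s

lemma DD_zero (A : Matrix (Fin n) (Fin n) ℤ_[p]) : DD 0 A := by
  intro r s; simp [DD]

lemma DD_mono {m m' : ℕ} (h : m' ≤ m) {A : Matrix (Fin n) (Fin n) ℤ_[p]}
    (hA : DD m A) : DD m' A :=
  fun r s => dvd_trans (pow_dvd_pow _ h) (hA r s)

lemma DD_mul {a b : ℕ} {A B : Matrix (Fin n) (Fin n) ℤ_[p]}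
    (hA : DD a A) (hB : DD b B) : DD (a + b) (A * B) := by
  intro r s
  rw [Matrix.mul_apply]
  refine Finset.dvd_sum fun k _ => ?_
  rw [pow_add]
  exact mul_dvd_mul (hA r k) (hB k s)

lemma DD_sub {m : ℕ} {A B : Matrix (Fin n) (Fin n) ℤ_[p]}
    (hA : DD m A) (hB : DD m B) : DD m (A - B) :=
  fun r s => by simpa using dvd_sub (hA r s) (hB r s)

lemma DD_add {m : ℕ} {A B : Matrix (Fin n) (Fin n) ℤ_[p]}
    (hA : DD m A) (hB : DD m B) : DD m (A + B) :=
  fun r s => by simpa using dvd_add (hA r s) (hB r s)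

lemma DD_neg {m : ℕ} {A : Matrix (Fin n) (Fin n) ℤ_[p]}
    (hA : DD m A) : DD m (-A) :=
  fun r s => by simpa using (hA r s).neg_right

lemma DD_pow {m : ℕ} {A : Matrix (Fin n) (Fin n) ℤ_[p]} (hA : DD m A) :
    ∀ k, DD (k * m) (A ^ k)
  | 0 => by simpa using DD_zero _
  | (k+1) => by
    have := DD_mul (DD_pow hA k) hA
    rw [pow_succ]
    simpa [add_mul] using this

lemma DD_sum {m : ℕ} {ι : Type*} {s : Finset ι} {f : ι → Matrix (Fin n) (Fin n) ℤ_[p]}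
    (h : ∀ k ∈ s, DD m (f k)) : DD m (∑ k ∈ s, f k) := by
  intro r s'
  rw [Matrix.sum_apply]
  exact Finset.dvd_sum fun k hk => h k hk r s'

lemma DD_natCast {c : ℕ} (h : p ∣ c) : DD 1 ((c : Matrix (Fin n) (Fin n) ℤ_[p])) := by
  intro r s
  have : ((c : Matrix (Fin n) (Fin n) ℤ_[p])) r s = if r = s then (c : ℤ_[p]) else 0 := by
    rw [← Matrix.diagonal_natCast, Matrix.diagonal_apply]
  rw [this, pow_one]
  split
  · exact_mod_cast Nat.cast_dvd_cast (α := ℤ_[p]) h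
  · exact dvd_zero _

/-- key step lemma -/
lemma DD_step {m : ℕ} (hm : 1 ≤ m) {A B : Matrix (Fin n) (Fin n) ℤ_[p]}
    (hAB : Commute A B) (h : DD m (A - B)) : DD (m + 1) (A ^ p - B ^ p) := by
  have hp2 : 2 ≤ p := hp.out.two_le
  set C := A - B with hC
  have hBC : Commute B C := (hAB.symm).sub_right (Commute.refl B)
  have hA : A = B + C := by simp [hC]
  have hexp : A ^ p = ∑ k ∈ Finset.range (p + 1),
      B ^ k * C ^ (p - k) * (p.choose k : Matrix (Fin n) (Fin n) ℤ_[p]) := by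
    rw [hA, hBC.add_pow]
  have hsplit : A ^ p - B ^ p = ∑ k ∈ Finset.range p,
      B ^ k * C ^ (p - k) * (p.choose k : Matrix (Fin n) (Fin n) ℤ_[p]) := by
    rw [hexp, Finset.sum_range_succ]
    simp
  rw [hsplit]
  refine DD_sum fun k hk => ?_
  rw [Finset.mem_range] at hk
  by_cases h2 : k + 2 ≤ p
  · have h1 : DD ((p - k) * m) (C ^ (p - k)) := DD_pow h _
    have h2m : m + 1 ≤ (p - k) * m := by
      have : 2 ≤ p - k := by omega
      nlinarith
    have : DD (0 + (m + 1) + 0)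
        (B ^ k * C ^ (p - k) * (p.choose k : Matrix (Fin n) (Fin n) ℤ_[p])) :=
      DD_mul (DD_mul (DD_zero _) (DD_mono h2m h1)) (DD_zero _)
    simpa using this
  · have hdvd : p ∣ p.choose k := hp.out.dvd_choose_self (by omega) (by omega)
    have hpk : p - k = 1 := by omega
    have : DD (0 + m + 1)
        (B ^ k * C ^ (p - k) * (p.choose k : Matrix (Fin n) (Fin n) ℤ_[p])) := by
      refine DD_mul (DD_mul (DD_zero _) ?_) (DD_natCast hdvd)
      rw [hpk, pow_one]; exact h
    simpa using this

lemma norm_le_of_pow_dvd {m : ℕ} {x : ℤ_[p]} (h : (p : ℤ_[p]) ^ m ∣ x) :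
    ‖x‖ ≤ (p : ℝ) ^ (-(m : ℤ)) := by
  rw [PadicInt.norm_le_pow_iff_mem_span_pow, Ideal.mem_span_singleton]
  exact h

lemma pow_dvd_of_norm_le {m : ℕ} {x : ℤ_[p]} (h : ‖x‖ ≤ (p : ℝ) ^ (-(m : ℤ))) :
    (p : ℤ_[p]) ^ m ∣ x := by
  rw [PadicInt.norm_le_pow_iff_mem_span_pow, Ideal.mem_span_singleton] at h
  exact h

lemma tendsto_bound [Fact p.Prime] :
    Tendsto (fun N : ℕ => (p : ℝ) ^ (-(N + 1) : ℤ)) atTop (nhds 0) := by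
  have hp1 : (1 : ℝ) < (p : ℝ) := by exact_mod_cast hp.out.one_lt
  have h0 : Tendsto (fun N : ℕ => ((p : ℝ)⁻¹) ^ N) atTop (nhds 0) :=
    tendsto_pow_atTop_nhds_zero_of_lt_one (by positivity)
      (by rw [inv_lt_one_iff₀]; right; exact hp1)
  have : Tendsto (fun N : ℕ => ((p : ℝ)⁻¹) ^ (N + 1)) atTop (nhds 0) :=
    h0.comp (tendsto_add_atTop_nat 1)
  refine this.congr fun N => ?_
  rw [inv_pow, ← zpow_natCast, ← zpow_neg]
  norm_num

/-- entrywise convergence from a Cauchy-type divisibility condition -/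
lemma converges {Q : ℕ → Matrix (Fin n) (Fin n) ℤ_[p]}
    (h : ∀ j j', j ≤ j' → ∀ r s, (p : ℤ_[p]) ^ (j + 1) ∣ (Q j' - Q j) r s) :
    ∃ L, Tendsto Q atTop (nhds L) := by
  have hp1 : (1 : ℝ) < (p : ℝ) := by exact_mod_cast hp.out.one_lt
  have hent : ∀ r s, ∃ y, Tendsto (fun j => Q j r s) atTop (nhds y) := by
    intro r s
    have hc : CauchySeq (fun j => Q j r s) := by
      refine cauchySeq_of_le_tendsto_0 (fun N => (p : ℝ) ^ (-(N + 1) : ℤ)) ?_ tendsto_bound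
      intro a b N ha hb
      rcases le_total a b with hab | hab
      · rw [dist_comm, dist_eq_norm]
        have := norm_le_of_pow_dvd (h a b hab r s)
        refine le_trans ?_ (le_trans this ?_)
        · simp [Matrix.sub_apply]
        · exact zpow_le_zpow_right₀ (le_of_lt hp1) (by omega)
      · rw [dist_eq_norm]
        have := norm_le_of_pow_dvd (h b a hab r s)
        refine le_trans ?_ (le_trans this ?_)
        · simp [Matrix.sub_apply]
        · exact zpow_le_zpow_right₀ (le_of_lt hp1) (by omega)
    exact cauchySeq_tendsto_of_complete hc
  choose L hL using hent
  refine ⟨Matrix.of L, ?_⟩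
  refine tendsto_pi_nhds.mpr ?_
  intro r
  rw [tendsto_pi_nhds]
  intro s
  exact hL r s

lemma DD_of_tendsto {m : ℕ} {A : ℕ → Matrix (Fin n) (Fin n) ℤ_[p]}
    {L : Matrix (Fin n) (Fin n) ℤ_[p]} (hA : Tendsto A atTop (nhds L))
    (h : ∀ j, DD m (A j)) : DD m L := by
  intro r s
  have hent : Tendsto (fun j => A j r s) atTop (nhds (L r s)) := by
    have h1 := tendsto_pi_nhds.mp hA r
    exact tendsto_pi_nhds.mp h1 s
  refine pow_dvd_of_norm_le ?_
  refine le_of_tendsto hent.norm (Eventually.of_forall fun j => ?_)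
  exact norm_le_of_pow_dvd (h j r s)

lemma tendsto_zero_of_DD {A : ℕ → Matrix (Fin n) (Fin n) ℤ_[p]}
    (h : ∀ j, DD (j + 1) (A j)) : Tendsto A atTop (nhds 0) := by
  refine tendsto_pi_nhds.mpr ?_
  intro r
  rw [tendsto_pi_nhds]
  intro s
  have : Tendsto (fun j : ℕ => A j r s) atTop (nhds 0) := by
    refine squeeze_zero_norm (fun j => ?_) (tendsto_bound (p := p))
    have := norm_le_of_pow_dvd (h j r s)
    simpa using this
  simpa using this

lemma DD_idem_powers {m : ℕ} {X : Matrix (Fin n) (Fin n) ℤ_[p]}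
    (h : DD m (X * X - X)) : ∀ k, DD m (X ^ (k + 1) - X)
  | 0 => by intro r s; simp
  | (k+1) => by
    have ih := DD_idem_powers h k
    have key : X ^ (k + 2) - X = X * (X ^ (k + 1) - X) + (X * X - X) := by
      have : X ^ (k + 2) = X * X ^ (k + 1) := by
        rw [pow_succ']
      rw [this]
      noncomm_ring
    rw [key]
    refine DD_add ?_ h
    have := DD_mul (DD_zero X) ih
    simpa using this

end Stmt11Aux

open Stmt11Aux

set_option synthInstance.maxHeartbeats 1000000 in
set_option maxHeartbeats 4000000 in
/-- a complete family of approximate orthogonal idempotents mod `p` in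
`M_n(ℤ_p)` limits to a genuine complete family of orthogonal idempotents, giving a direct
sum decomposition of `ℤ_p^n`. -/
theorem stmt_11 (p : ℕ) [Fact p.Prime] (n d : ℕ)
    (P : Fin d → Matrix (Fin n) (Fin n) ℤ_[p])
    (hcomm : ∀ i j, P i * P j = P j * P i)
    (hidem : ∀ i, ∀ r s, (p : ℤ_[p]) ∣ (P i * P i - P i) r s)
    (horth : ∀ i j, i ≠ j → ∀ r s, (p : ℤ_[p]) ∣ (P i * P j) r s)
    (hsum : ∀ r s, (p : ℤ_[p]) ∣ ((∑ i, P i) - 1) r s) :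
    ∃ Pt : Fin d → Matrix (Fin n) (Fin n) ℤ_[p],
      (∀ i, Filter.Tendsto (fun j : ℕ => P i ^ p ^ j) Filter.atTop (nhds (Pt i))) ∧
      (∑ i, Pt i) = 1 ∧
      (∀ i, Pt i * Pt i = Pt i) ∧
      (∀ i j, i ≠ j → Pt i * Pt j = 0) ∧
      DirectSum.IsInternal fun i : Fin d => LinearMap.range (Matrix.toLin' (Pt i)) := by
  classical
  have hp2 : 2 ≤ p := (Fact.out : p.Prime).two_le
  set Q : Fin d → ℕ → Matrix (Fin n) (Fin n) ℤ_[p] := fun i j => P i ^ p ^ j with hQdef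
  -- improving idempotency
  have hQidem : ∀ i j, DD (j + 1) (Q i j * Q i j - Q i j) := by
    intro i j
    induction j with
    | zero =>
      intro r s
      simpa [hQdef] using hidem i r s
    | succ j ih =>
      have hc : Commute (Q i j * Q i j) (Q i j) := by
        simp only [hQdef]
        exact ((Commute.refl _).pow_pow _ _).mul_left ((Commute.refl _).pow_pow _ _)
      have hstep := DD_step (Nat.le_add_left 1 j) hc ih
      have e1 : (Q i j * Q i j) ^ p = Q i (j + 1) * Q i (j + 1) := by
        simp only [hQdef, ← pow_add, ← pow_mul]
        congr 1
        rw [pow_succ]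
        ring
      have e2 : (Q i j) ^ p = Q i (j + 1) := by
        simp only [hQdef, ← pow_mul, ← pow_succ]
      rw [e1, e2] at hstep
      exact hstep
  -- successive differences
  have hdiff : ∀ i j, DD (j + 1) (Q i (j + 1) - Q i j) := by
    intro i j
    have h1 : DD (j + 1) ((Q i j) ^ ((p - 1) + 1) - Q i j) :=
      DD_idem_powers (hQidem i j) (p - 1)
    have hpe : (p - 1) + 1 = p := by omega
    rw [hpe] at h1
    have e2 : (Q i j) ^ p = Q i (j + 1) := by
      simp only [hQdef, ← pow_mul, ← pow_succ]
    rwa [e2] at h1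
  -- telescoping
  have htele : ∀ i j j', j ≤ j' → DD (j + 1) (Q i j' - Q i j) := by
    intro i j j' hjj'
    induction j', hjj' using Nat.le_induction with
    | base => intro r s; simp
    | succ j'' hj ih =>
      have h1 : DD (j + 1) (Q i (j'' + 1) - Q i j'') :=
        DD_mono (by omega) (hdiff i j'')
      have : Q i (j'' + 1) - Q i j = (Q i (j'' + 1) - Q i j'') + (Q i j'' - Q i j) := by
        abel
      rw [this]
      exact DD_add h1 ih
  -- limits exist
  have hconv : ∀ i, ∃ L, Filter.Tendsto (Q i) Filter.atTop (nhds L) := by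
    intro i
    exact converges fun j j' h r s => htele i j j' h r s
  choose Pt hPt using hconv
  -- idempotency of limits
  have hPtidem : ∀ i, Pt i * Pt i = Pt i := by
    intro i
    have h1 : Filter.Tendsto (fun j => Q i j * Q i j - Q i j) Filter.atTop
        (nhds (Pt i * Pt i - Pt i)) := ((hPt i).mul (hPt i)).sub (hPt i)
    have h2 : Filter.Tendsto (fun j => Q i j * Q i j - Q i j) Filter.atTop (nhds 0) :=
      tendsto_zero_of_DD fun j => hQidem i j
    exact sub_eq_zero.mp (tendsto_nhds_unique h1 h2)
  -- orthogonality of limits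
  have hPtorth : ∀ i k, i ≠ k → Pt i * Pt k = 0 := by
    intro i k hik
    have h1 : Filter.Tendsto (fun j => Q i j * Q k j) Filter.atTop
        (nhds (Pt i * Pt k)) := (hPt i).mul (hPt k)
    have h2 : Filter.Tendsto (fun j => Q i j * Q k j) Filter.atTop (nhds 0) := by
      refine tendsto_zero_of_DD fun j => ?_
      have he : Q i j * Q k j = (P i * P k) ^ (p ^ j) := by
        simp only [hQdef]
        exact (Commute.mul_pow (hcomm i k) (p ^ j)).symm
      rw [he]
      have hD1 : DD 1 (P i * P k) := by
        intro r s; simpa using horth i k hik r s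
      have := DD_pow hD1 (p ^ j)
      refine DD_mono ?_ (by simpa using this)
      have : j < p ^ j := Nat.lt_pow_self (by omega : 1 < p)
      omega
    exact tendsto_nhds_unique h1 h2
  -- limits are ≡ P i mod p
  have hPtmod : ∀ i, DD 1 (Pt i - P i) := by
    intro i
    refine DD_of_tendsto (L := Pt i - P i)
      (A := fun j => Q i j - P i) (((hPt i).sub tendsto_const_nhds)) fun j => ?_
    have h1 : DD 1 (Q i j - Q i 0) := htele i 0 j (Nat.zero_le j)
    have : Q i 0 = P i := by simp [hQdef]
    rwa [this] at h1
  -- the sum is 1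
  have hsumPt : (∑ i, Pt i) = 1 := by
    set S : Matrix (Fin n) (Fin n) ℤ_[p] := ∑ i, Pt i with hSdef
    have hSidem : S * S = S := by
      rw [hSdef, Finset.sum_mul_sum]
      refine Finset.sum_congr rfl fun i _ => ?_
      rw [Finset.sum_eq_single i (fun k _ hk => hPtorth i k (Ne.symm hk))
        (fun h => absurd (Finset.mem_univ i) h)]
      exact hPtidem i
    have hS1 : DD 1 (S - 1) := by
      have he : S - 1 = (∑ i, (Pt i - P i)) + ((∑ i, P i) - 1) := by
        rw [Finset.sum_sub_distrib]
        abel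
      rw [he]
      refine DD_add (DD_sum fun i _ => hPtmod i) ?_
      intro r s; simpa using hsum r s
    set R : Matrix (Fin n) (Fin n) ℤ_[p] := 1 - S with hRdef
    have hRidem : R * R = R := by
      rw [hRdef]
      have : (1 - S) * (1 - S) = 1 - S - S + S * S := by noncomm_ring
      rw [this, hSidem]
      abel
    have hRpow : ∀ k, R ^ (k + 1) = R := by
      intro k
      induction k with
      | zero => simp
      | succ k ih => rw [pow_succ, ih, hRidem]
    have hR1 : DD 1 R := by
      have : R = -(S - 1) := by rw [hRdef]; abel
      rw [this]
      exact DD_neg hS1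
    have hRk : ∀ k, DD (k + 1) R := by
      intro k
      have := DD_pow hR1 (k + 1)
      rw [hRpow k] at this
      simpa using this
    have hR0 : R = 0 := by
      ext r s
      have hle : ∀ k : ℕ, ‖R r s‖ ≤ (p : ℝ) ^ (-(k + 1 : ℕ) : ℤ) := fun k =>
        norm_le_of_pow_dvd (hRk k r s)
      have : ‖R r s‖ ≤ 0 := by
        refine ge_of_tendsto (tendsto_bound (p := p)) (Eventually.of_forall fun k => ?_)
        have h := hle k
        refine le_trans h (le_of_eq ?_)
        norm_num
      simpa using norm_le_zero_iff.mp this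
    rw [hRdef] at hR0
    exact (sub_eq_zero.mp hR0).symm
  -- direct sum decomposition
  have hinternal : DirectSum.IsInternal
      fun i : Fin d => LinearMap.range (Matrix.toLin' (Pt i)) := by
    set f : Fin d → ((Fin n → ℤ_[p]) →ₗ[ℤ_[p]] (Fin n → ℤ_[p])) :=
      fun i => Matrix.toLin' (Pt i) with hfdef
    have hfidem : ∀ i, f i ∘ₗ f i = f i := by
      intro i
      rw [hfdef]
      rw [← Matrix.toLin'_mul, hPtidem]
    have hforth : ∀ i k, i ≠ k → f i ∘ₗ f k = 0 := by
      intro i k hik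
      rw [hfdef]
      rw [← Matrix.toLin'_mul, hPtorth i k hik]
      exact Matrix.toLin'.map_zero
    have hfsum : (∑ i, f i) = LinearMap.id := by
      rw [hfdef, ← map_sum, hsumPt, Matrix.toLin'_one]
    rw [DirectSum.isInternal_submodule_iff_iSupIndep_and_iSup_eq_top]
    constructor
    · intro i
      rw [Submodule.disjoint_def]
      intro x hxi hxj
      have hker : (⨆ j, ⨆ (_ : j ≠ i), LinearMap.range (f j)) ≤ LinearMap.ker (f i) := by
        refine iSup_le fun j => iSup_le fun hj => ?_
        rw [LinearMap.range_le_ker_iff]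
        exact hforth i j (Ne.symm hj)
      have hx0 : f i x = 0 := hker hxj
      obtain ⟨y, hy⟩ := hxi
      have : f i x = x := by
        conv_rhs => rw [← hy]
        rw [← hy, ← LinearMap.comp_apply, hfidem]
      rw [← this, hx0]
    · rw [eq_top_iff]
      intro x _
      have hx : x = ∑ i, f i x := by
        rw [← LinearMap.sum_apply, hfsum, LinearMap.id_apply]
      rw [hx]
      exact Submodule.sum_mem _ fun i _ =>
        Submodule.mem_iSup_of_mem i (LinearMap.mem_range_self (f i) x)
  exact ⟨Pt, hPt, hsumPt, hPtidem, hPtorth, hinternal⟩
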